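/- arXiv:2104.03073 — 2 statements merged into one kernel-verified Lean document; each statement's English description precedes it below -/
import Mathlib

section
/- Suppose ρ₁ = (1 − ρ₂)²/4 so that Δ = 0, and set ū = (1 − ρ₂)/2. Let y₁(0) ≠ 0 and u(0) ∈ ℂ. On a neighborhood of t = 0 where 1 − y₁(0)t ≠ 0 and 1 + (u(0) − ū)·log(1 − y₁(0)t) ≠ 0, define u(t) = ( u(0) + ū·(u(0) − ū)·log(1 − y₁(0)t) ) / ( 1 + (u(0) − ū)·log(1 − y₁(0)t) ). Then u'(t) = y₁(0)·(1 − y₁(0)t)⁻¹·(u(t) − ū)² on this neighborhood, and u(0) equals the given initial value. -/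
theorem stmt_5 (ρ₁ ρ₂ : ℂ) (hρ : ρ₁ = (1 - ρ₂) ^ 2 / 4)
    (ubar : ℂ) (hubar : ubar = (1 - ρ₂) / 2)
    (y₁0 u0 : ℂ) (hy : y₁0 ≠ 0)
    (u : ℂ → ℂ)
    (hu : ∀ t : ℂ, u t =
      (u0 + ubar * (u0 - ubar) * Complex.log (1 - y₁0 * t)) /
      (1 + (u0 - ubar) * Complex.log (1 - y₁0 * t))) :
    (∀ t : ℂ, (1 - y₁0 * t) ∈ Complex.slitPlane →
        (1 + (u0 - ubar) * Complex.log (1 - y₁0 * t)) ≠ 0 →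
        HasDerivAt u (y₁0 * (1 - y₁0 * t)⁻¹ * (u t - ubar) ^ 2) t) ∧
    u 0 = u0 := by
  constructor
  · intro t hs hd
    have hne : (1 - y₁0 * t) ≠ 0 := Complex.slitPlane_ne_zero hs
    set c := u0 - ubar with hc
    -- derivative of t ↦ log (1 - y₁0 * t)
    have hlin : HasDerivAt (fun x : ℂ => 1 - y₁0 * x) (-y₁0) t := by
      simpa using ((hasDerivAt_id t).const_mul y₁0).const_sub 1
    have hlog : HasDerivAt (fun x : ℂ => Complex.log (1 - y₁0 * x))
        (-y₁0 / (1 - y₁0 * t)) t := hlin.clog hs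
    have hN : HasDerivAt (fun x : ℂ => u0 + ubar * c * Complex.log (1 - y₁0 * x))
        (ubar * c * (-y₁0 / (1 - y₁0 * t))) t := (hlog.const_mul (ubar * c)).const_add u0
    have hD : HasDerivAt (fun x : ℂ => 1 + c * Complex.log (1 - y₁0 * x))
        (c * (-y₁0 / (1 - y₁0 * t))) t := (hlog.const_mul c).const_add 1
    have hdiv : HasDerivAt (fun x : ℂ => (u0 + ubar * c * Complex.log (1 - y₁0 * x)) /
        (1 + c * Complex.log (1 - y₁0 * x)))
        ((ubar * c * (-y₁0 / (1 - y₁0 * t)) * (1 + c * Complex.log (1 - y₁0 * t)) -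
          (u0 + ubar * c * Complex.log (1 - y₁0 * t)) * (c * (-y₁0 / (1 - y₁0 * t)))) /
          (1 + c * Complex.log (1 - y₁0 * t)) ^ 2) t := hN.fun_div hD hd
    have hu' : u = fun x : ℂ =>
        (u0 + ubar * c * Complex.log (1 - y₁0 * x)) /
        (1 + c * Complex.log (1 - y₁0 * x)) := funext hu
    rw [hu']
    convert hdiv using 1
    field_simp
    ring
  · rw [hu 0]
    simp
end

section
/- Let aₙₘ, bₙₘ (n,m = 1,2) be such that the 2×2 matrices a and b are mutually inverse, and let ρ₁, ρ₂ be constants. Suppose x₁, x₂ : I → ℂ are differentiable, and define y₁ = a₁₁x₁ + a₁₂x₂, y₂ = a₂₁x₁ + a₂₂x₂. If y₁' = y₁² and y₂' = ρ₁y₁² + ρ₂y₁y₂ + y₂², then x₁, x₂ satisfy xₙ' = cₙ₁x₁² + cₙ₂x₁x₂ + cₙ₃x₂² (n = 1,2), where cₙ₁ = bₙ₁a₁₁² + bₙ₂(ρ₁a₁₁² + (ρ₂a₁₁ + a₂₁)a₂₁), cₙ₂ = 2bₙ₁a₁₁a₁₂ + bₙ₂(2ρ₁a₁₁a₁₂ +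 ρ₂(a₁₁a₂₂ + a₁₂a₂₁) + 2a₂₁a₂₂), and cₙ₃ = bₙ₁a₁₂² + bₙ₂(ρ₁a₁₂² + (ρ₂a₁₂ + a₂₂)a₂₂). -/
theorem stmt_7 (I : Set ℝ) (ρ₁ ρ₂ : ℂ)
    (a₁₁ a₁₂ a₂₁ a₂₂ b₁₁ b₁₂ b₂₁ b₂₂ : ℂ)
    (hinv1 : b₁₁ * a₁₁ + b₁₂ * a₂₁ = 1) (hinv2 : b₁₁ * a₁₂ + b₁₂ * a₂₂ = 0)
    (hinv3 : b₂₁ * a₁₁ + b₂₂ * a₂₁ = 0) (hinv4 : b₂₁ * a₁₂ + b₂₂ * a₂₂ = 1)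
    (x₁ x₂ y₁ y₂ : ℝ → ℂ)
    (hy₁ : ∀ t, y₁ t = a₁₁ * x₁ t + a₁₂ * x₂ t)
    (hy₂ : ∀ t, y₂ t = a₂₁ * x₁ t + a₂₂ * x₂ t)
    (hdy₁ : ∀ t ∈ I, HasDerivAt y₁ ((y₁ t) ^ 2) t)
    (hdy₂ : ∀ t ∈ I, HasDerivAt y₂
      (ρ₁ * (y₁ t) ^ 2 + ρ₂ * y₁ t * y₂ t + (y₂ t) ^ 2) t)
    (hdx₁ : ∀ t ∈ I, DifferentiableAt ℝ x₁ t)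
    (hdx₂ : ∀ t ∈ I, DifferentiableAt ℝ x₂ t)
    (c₁₁ c₁₂ c₁₃ c₂₁ c₂₂ c₂₃ : ℂ)
    (hc₁₁ : c₁₁ = b₁₁ * a₁₁ ^ 2 + b₁₂ * (ρ₁ * a₁₁ ^ 2 + (ρ₂ * a₁₁ + a₂₁) * a₂₁))
    (hc₁₂ : c₁₂ = 2 * b₁₁ * a₁₁ * a₁₂ +
      b₁₂ * (2 * ρ₁ * a₁₁ * a₁₂ + ρ₂ * (a₁₁ * a₂₂ + a₁₂ * a₂₁) + 2 * a₂₁ * a₂₂))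
    (hc₁₃ : c₁₃ = b₁₁ * a₁₂ ^ 2 + b₁₂ * (ρ₁ * a₁₂ ^ 2 + (ρ₂ * a₁₂ + a₂₂) * a₂₂))
    (hc₂₁ : c₂₁ = b₂₁ * a₁₁ ^ 2 + b₂₂ * (ρ₁ * a₁₁ ^ 2 + (ρ₂ * a₁₁ + a₂₁) * a₂₁))
    (hc₂₂ : c₂₂ = 2 * b₂₁ * a₁₁ * a₁₂ +
      b₂₂ * (2 * ρ₁ * a₁₁ * a₁₂ + ρ₂ * (a₁₁ * a₂₂ + a₁₂ * a₂₁) + 2 * a₂₁ * a₂₂))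
    (hc₂₃ : c₂₃ = b₂₁ * a₁₂ ^ 2 + b₂₂ * (ρ₁ * a₁₂ ^ 2 + (ρ₂ * a₁₂ + a₂₂) * a₂₂)) :
    ∀ t ∈ I,
      HasDerivAt x₁ (c₁₁ * (x₁ t) ^ 2 + c₁₂ * x₁ t * x₂ t + c₁₃ * (x₂ t) ^ 2) t ∧
      HasDerivAt x₂ (c₂₁ * (x₁ t) ^ 2 + c₂₂ * x₁ t * x₂ t + c₂₃ * (x₂ t) ^ 2) t := by
  intro t ht
  have hx1 : x₁ = fun t => b₁₁ * y₁ t + b₁₂ * y₂ t := by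
    funext t
    rw [hy₁, hy₂]
    linear_combination (-(x₁ t)) * hinv1 - x₂ t * hinv2
  have hx2 : x₂ = fun t => b₂₁ * y₁ t + b₂₂ * y₂ t := by
    funext t
    rw [hy₁, hy₂]
    linear_combination (-(x₁ t)) * hinv3 - x₂ t * hinv4
  constructor
  · have h : HasDerivAt (fun t => b₁₁ * y₁ t + b₁₂ * y₂ t) _ t := ((hdy₁ t ht).const_mul b₁₁).add ((hdy₂ t ht).const_mul b₁₂)
    rw [← hx1] at h
    convert h using 1
    rw [hc₁₁, hc₁₂, hc₁₃, hy₁, hy₂]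
    ring
  · have h : HasDerivAt (fun t => b₂₁ * y₁ t + b₂₂ * y₂ t) _ t := ((hdy₁ t ht).const_mul b₂₁).add ((hdy₂ t ht).const_mul b₂₂)
    rw [← hx2] at h
    convert h using 1
    rw [hc₂₁, hc₂₂, hc₂₃, hy₁, hy₂]
    ring
end
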